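/- Let \psi_\eps(v) = (2\pi\eps)^{-d/2}\exp(-|v|^2/(2\eps)) be the Gaussian mollifier. If f is a nonnegative integrable function on R^d with positive total mass \rho > 0 and finite second moment \int |v|^2 f\,dv =: m_2 < \infty, then there is a constant C > 0 depending only on \eps, \rho, m_2, d such that |\log((f * \psi_\eps)(v))| \leq C(1 + |v|^2) for all v \in R^d. -/

import Mathlib

open MeasureTheory Real

private lemma mul_integrable_of_bdd {d : ℕ} {f : EuclideanSpace ℝ (Fin d) → ℝ}
    (hf : Integrable f) {g : EuclideanSpace ℝ (Fin d) → ℝ} (hg : Continuous g)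
    (C : ℝ) (hb : ∀ y, |g y| ≤ C) :
    Integrable (fun y => f y * g y) := by
  have h := hf.bdd_mul (c := C) hg.aestronglyMeasurable (Filter.Eventually.of_forall fun y => by simpa using hb y)
  simpa [mul_comm] using h

private lemma exp_lower_aux (a x : ℝ) (ha : 0 < a) (hx : 0 ≤ x) :
    Real.exp (-a) * (1 - x / a) ≤ Real.exp (-x) := by
  rcases le_or_gt x a with h | h
  · have h1 : Real.exp (-a) ≤ Real.exp (-x) := Real.exp_le_exp.2 (by linarith)
    have h2 : 0 ≤ x / a := div_nonneg hx ha.le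
    nlinarith [Real.exp_pos (-a)]
  · have h2 : 1 - x / a < 0 := by
      rw [sub_neg]
      exact (one_lt_div ha).2 h
    nlinarith [Real.exp_pos (-a), Real.exp_pos (-x)]

set_option maxHeartbeats 1000000
/-- Quadratic bound on `|log (f ∗ ψ_ε)|`: if `f ≥ 0` is integrable with positive mass and
finite second moment, then `|log((f ∗ ψ_ε)(v))| ≤ C (1 + |v|²)` for a constant `C` depending
only on `ε`, the mass, the second moment and `d`. -/
theorem log_conv_gaussian_quadratic_bound (d : ℕ) (hd : 1 ≤ d) (ε : ℝ) (hε : 0 < ε)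
    (ψ : EuclideanSpace ℝ (Fin d) → ℝ)
    (hψ : ψ = fun v => (2 * π * ε) ^ (-(d : ℝ) / 2) * Real.exp (-‖v‖ ^ 2 / (2 * ε)))
    (f : EuclideanSpace ℝ (Fin d) → ℝ) (hf : Integrable f)
    (hfpos : ∀ v, 0 ≤ f v) (ρ : ℝ) (hρ : 0 < ρ) (hmass : ∫ v, f v = ρ)
    (hm2 : Integrable (fun v => ‖v‖ ^ 2 * f v)) :
    ∃ C : ℝ, 0 < C ∧ ∀ v : EuclideanSpace ℝ (Fin d),
      |Real.log (∫ y, f y * ψ (v - y))| ≤ C * (1 + ‖v‖ ^ 2) := by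
  have hπ : (0:ℝ) < 2 * π * ε := by positivity
  set A : ℝ := (2 * π * ε) ^ (-(d:ℝ)/2) with hA_def
  have hA : 0 < A := Real.rpow_pos_of_pos hπ _
  set m₂ : ℝ := ∫ y, ‖y‖^2 * f y with hm2_def
  have hm2nn : 0 ≤ m₂ :=
    integral_nonneg fun y => mul_nonneg (by positivity) (hfpos y)
  set a : ℝ := 2 * m₂ / (ε * ρ) + 1 with ha_def
  have ha : 0 < a := by
    have h0 : 0 ≤ 2 * m₂ / (ε * ρ) := div_nonneg (by linarith) (by positivity)
    rw [ha_def]; linarith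
  have hεa : 0 < ε * a := by positivity
  have hkey : m₂ / (ε * a) ≤ ρ / 2 := by
    rw [div_le_iff₀ hεa, ha_def]
    have h1 : ρ / 2 * (ε * (2 * m₂ / (ε * ρ) + 1)) = m₂ + ρ * ε / 2 := by
      field_simp
    rw [h1]
    nlinarith [mul_pos hρ hε]
  set c₀ : ℝ := Real.exp (-a) * (ρ / 2) with hc₀_def
  have hc₀ : 0 < c₀ := by positivity
  -- integrability of f y * exp(-‖y‖²/ε)
  have hI_int : Integrable (fun y : EuclideanSpace ℝ (Fin d) => f y * Real.exp (-‖y‖^2/ε)) := by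
    refine mul_integrable_of_bdd hf (by fun_prop) 1 (fun y => ?_)
    rw [abs_of_nonneg (Real.exp_pos _).le]
    refine Real.exp_le_one_iff.2 ?_
    rw [neg_div]
    exact neg_nonpos.2 (by positivity)
  -- lower bound on I := ∫ f y * exp(-‖y‖²/ε)
  have hI_low : c₀ ≤ ∫ y, f y * Real.exp (-‖y‖^2/ε) := by
    have hlin_int : Integrable (fun y : EuclideanSpace ℝ (Fin d) =>
        Real.exp (-a) * f y - Real.exp (-a)/(ε*a) * (‖y‖^2 * f y)) :=
      (hf.const_mul _).sub (hm2.const_mul _)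
    have hptw : ∀ y : EuclideanSpace ℝ (Fin d),
        Real.exp (-a) * f y - Real.exp (-a)/(ε*a) * (‖y‖^2 * f y)
          ≤ f y * Real.exp (-‖y‖^2/ε) := by
      intro y
      have hx : (0:ℝ) ≤ ‖y‖^2/ε := by positivity
      have h := exp_lower_aux a (‖y‖^2/ε) ha hx
      have h2 := mul_le_mul_of_nonneg_left h (hfpos y)
      have heq : Real.exp (-a) * f y - Real.exp (-a)/(ε*a) * (‖y‖^2 * f y)
          = f y * (Real.exp (-a) * (1 - ‖y‖^2/ε/a)) := by
        field_simp
      have heq2 : Real.exp (-(‖y‖^2/ε)) = Real.exp (-‖y‖^2/ε) := by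
        rw [neg_div]
      rw [heq]
      rw [heq2] at h2
      exact h2
    have hmono := integral_mono hlin_int hI_int hptw
    have hcalc : (∫ y, (Real.exp (-a) * f y - Real.exp (-a)/(ε*a) * (‖y‖^2 * f y)))
        = Real.exp (-a) * ρ - Real.exp (-a)/(ε*a) * m₂ := by
      rw [integral_sub (hf.const_mul _) (hm2.const_mul _), integral_const_mul,
        integral_const_mul, hmass, hm2_def]
    rw [hcalc] at hmono
    have hmul := mul_le_mul_of_nonneg_left hkey (Real.exp_pos (-a)).le
    have hring : Real.exp (-a)/(ε*a) * m₂ = Real.exp (-a) * (m₂/(ε*a)) := by ring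
    rw [hc₀_def]
    rw [hring] at hmono
    linarith
  -- the constant
  refine ⟨|Real.log (A*ρ)| + |Real.log (A*c₀)| + 1/ε + 1, by positivity, fun v => ?_⟩
  simp only [hψ]
  set G : ℝ := ∫ y, f y * (A * Real.exp (-‖v - y‖^2/(2*ε))) with hG_def
  have hcontv : Continuous fun y : EuclideanSpace ℝ (Fin d) =>
      A * Real.exp (-‖v - y‖^2/(2*ε)) := by fun_prop
  have hexp_le_one : ∀ y : EuclideanSpace ℝ (Fin d),
      Real.exp (-‖v - y‖^2/(2*ε)) ≤ 1 := by
    intro y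
    refine Real.exp_le_one_iff.2 ?_
    rw [neg_div]
    exact neg_nonpos.2 (by positivity)
  have h1 : Integrable (fun y => f y * (A * Real.exp (-‖v - y‖^2/(2*ε)))) := by
    refine mul_integrable_of_bdd hf hcontv A (fun y => ?_)
    rw [abs_of_nonneg (by positivity)]
    nlinarith [hexp_le_one y, Real.exp_pos (-‖v - y‖^2/(2*ε))]
  -- upper bound
  have hup : G ≤ A * ρ := by
    have hint2 : Integrable (fun y => f y * A) := hf.mul_const A
    have hm := integral_mono h1 hint2 (fun y =>
      mul_le_mul_of_nonneg_left (by nlinarith [hexp_le_one y, hA.le, hA]) (hfpos y))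
    rw [hG_def]
    calc (∫ y, f y * (A * Real.exp (-‖v - y‖^2/(2*ε)))) ≤ ∫ y, f y * A := hm
      _ = ρ * A := by rw [integral_mul_const, hmass]
      _ = A * ρ := by ring
  -- lower bound
  have hlow : A * Real.exp (-‖v‖^2/ε) * c₀ ≤ G := by
    have hint3 : Integrable (fun y : EuclideanSpace ℝ (Fin d) =>
        (A * Real.exp (-‖v‖^2/ε)) * (f y * Real.exp (-‖y‖^2/ε))) := hI_int.const_mul _
    have hptw : ∀ y : EuclideanSpace ℝ (Fin d),
        (A * Real.exp (-‖v‖^2/ε)) * (f y * Real.exp (-‖y‖^2/ε))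
          ≤ f y * (A * Real.exp (-‖v - y‖^2/(2*ε))) := by
      intro y
      have hnorm : ‖v - y‖^2 ≤ 2*‖v‖^2 + 2*‖y‖^2 := by
        have h := norm_sub_le v y
        nlinarith [sq_nonneg (‖v‖ - ‖y‖), norm_nonneg (v - y), norm_nonneg v, norm_nonneg y]
      have hexp : Real.exp (-‖v‖^2/ε) * Real.exp (-‖y‖^2/ε)
          ≤ Real.exp (-‖v - y‖^2/(2*ε)) := by
        rw [← Real.exp_add]
        refine Real.exp_le_exp.2 ?_
        rw [← add_div, div_le_div_iff₀ hε (by positivity)]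
        nlinarith
      calc (A * Real.exp (-‖v‖^2/ε)) * (f y * Real.exp (-‖y‖^2/ε))
          = f y * (A * (Real.exp (-‖v‖^2/ε) * Real.exp (-‖y‖^2/ε))) := by ring
        _ ≤ f y * (A * Real.exp (-‖v - y‖^2/(2*ε))) := by
            refine mul_le_mul_of_nonneg_left ?_ (hfpos y)
            exact mul_le_mul_of_nonneg_left hexp hA.le
    have hmono := integral_mono hint3 h1 hptw
    rw [integral_const_mul] at hmono
    have hmul := mul_le_mul_of_nonneg_left hI_low
      (by positivity : (0:ℝ) ≤ A * Real.exp (-‖v‖^2/ε))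
    rw [hG_def]
    linarith
  have hGpos : 0 < G := lt_of_lt_of_le (by positivity) hlow
  have hlog_up : Real.log G ≤ Real.log (A*ρ) := Real.log_le_log hGpos hup
  have hlog_low : Real.log (A*c₀) - ‖v‖^2/ε ≤ Real.log G := by
    have h := Real.log_le_log (by positivity) hlow
    rw [Real.log_mul (by positivity) hc₀.ne', Real.log_mul hA.ne' (Real.exp_ne_zero _),
      Real.log_exp, neg_div] at h
    rw [Real.log_mul hA.ne' hc₀.ne']
    linarith
  rw [abs_le]
  have habs1 : Real.log (A*ρ) ≤ |Real.log (A*ρ)| := le_abs_self _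
  have habs2 : -|Real.log (A*c₀)| ≤ Real.log (A*c₀) := neg_abs_le _
  have hv2 : (0:ℝ) ≤ ‖v‖^2 := by positivity
  have h1ε : (0:ℝ) < 1/ε := by positivity
  have habsnn1 : (0:ℝ) ≤ |Real.log (A*ρ)| := abs_nonneg _
  have habsnn2 : (0:ℝ) ≤ |Real.log (A*c₀)| := abs_nonneg _
  have hdiv : ‖v‖^2/ε = (1/ε) * ‖v‖^2 := by ring
  constructor
  · nlinarith
  · nlinarith
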